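/- The constant 1/2 in the inequality ‖f‖_{[a,b],p} ≤ (b−a)^{1/p − 1}·|∫_a^b f(t) dt| + (1/2)·(b−a)^{1/p}·(2^{p+1} − 1)^{1/p}·(p+1)^{−1/p}·V_a^b(f) is sharp: if D > 0 is such that for every p ≥ 1, every a < b, and every function f : [a,b] → ℝ of bounded variation one has ‖f‖_{[a,b],p} ≤ (b−a)^{1/p − 1}·|∫_a^b f(t) dt| + D·(b−a)^{1/p}·(2^{p+1} − 1)^{1/p}·(p+1)^{−1/p}·V_a^b(f), then D ≥ 1/2. -/

import Mathlib

open MeasureTheory Set Filter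

/-- For a positive base `c`, `c ^ (p⁻¹)` tends to `1` as `p → ∞`. -/
lemma tendsto_rpow_inv_one {c : ℝ} (hc : 0 < c) :
    Tendsto (fun p : ℝ => c ^ p⁻¹) atTop (nhds 1) := by
  have hcont : Continuous fun y : ℝ => c ^ y := by
    have : (fun y : ℝ => c ^ y) = fun y => Real.exp (Real.log c * y) := by
      funext y; exact Real.rpow_def_of_pos hc y
    rw [this]; continuity
  have := (hcont.tendsto 0).comp tendsto_inv_atTop_zero
  simpa [Function.comp_def, Real.rpow_zero] using this

/-- Sharpness of the constant `1/2` in the inequality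
`‖f‖_{[a,b],p} ≤ (b-a)^{1/p-1} |∫_a^b f| +
(1/2) (b-a)^{1/p} (2^{p+1}-1)^{1/p} (p+1)^{-1/p} ⋁_a^b (f)`. -/
theorem sharpness_p_norm_variation_constant
    (D : ℝ) (hD : 0 < D)
    (h : ∀ p : ℝ, 1 ≤ p → ∀ a b : ℝ, a < b → ∀ f : ℝ → ℝ,
      BoundedVariationOn f (Icc a b) →
      (∫ t in a..b, |f t| ^ p) ^ p⁻¹ ≤
        (b - a) ^ (p⁻¹ - 1) * |∫ t in a..b, f t| +
          D * ((b - a) ^ p⁻¹ * (2 ^ (p + 1) - 1) ^ p⁻¹ * (p + 1) ^ (-p⁻¹)) *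
            (eVariationOn f (Icc a b)).toReal) :
    1 / 2 ≤ D := by
  by_contra hcon
  push_neg at hcon
  set u : ℝ := (1 - 2 * D) / 2 with hu_def
  have hu0 : 0 < u := by simp only [hu_def]; linarith
  have hu1 : u < 1 / 2 := by simp only [hu_def]; linarith
  set x : ℝ := 1 - u with hx_def
  have hx0 : 0 < x := by simp only [hx_def]; linarith
  have hx1 : x ≤ 1 := by simp only [hx_def]; linarith
  set f : ℝ → ℝ := fun t => if x ≤ t then 1 else 0 with hf_def
  -- f is monotone
  have hmono : Monotone f := by
    intro s t hst
    simp only [hf_def]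
    split_ifs with h1 h2 h2
    · exact le_rfl
    · exact absurd (h1.trans hst) h2
    · norm_num
    · exact le_rfl
  have hf1 : f 1 = 1 := by simp [hf_def, hx1]
  have hf0 : f 0 = 0 := by simp [hf_def, not_le.mpr hx0]
  -- variation is 1
  have hV : eVariationOn f (Icc (0:ℝ) 1) = 1 := by
    apply le_antisymm
    · have := (hmono.monotoneOn (Icc (0:ℝ) 1)).eVariationOn_le
        (a := 0) (b := 1) (by simp) (by norm_num)
      rw [inter_self] at this
      simpa [hf1, hf0] using this
    · have := eVariationOn.edist_le f (x := (0:ℝ)) (y := 1)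
        (s := Icc (0:ℝ) 1) (by simp) (by norm_num)
      rw [hf0, hf1] at this
      simpa [edist_dist, Real.dist_eq] using this
  have hBV : BoundedVariationOn f (Icc (0:ℝ) 1) := by
    rw [BoundedVariationOn, hV]; exact ENNReal.one_ne_top
  -- f as an indicator
  have hf_ind : f = (Ici x).indicator (fun _ => (1:ℝ)) := by
    funext t
    simp [hf_def, Set.indicator_apply, Set.mem_Ici]
  have hset : Ici x ∩ Ioc (0:ℝ) 1 = Icc x 1 := by
    ext t
    simp only [mem_inter_iff, mem_Ici, mem_Ioc, mem_Icc]
    constructor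
    · rintro ⟨h1, _, h3⟩; exact ⟨h1, h3⟩
    · rintro ⟨h1, h2⟩; exact ⟨h1, hx0.trans_le h1, h2⟩
  -- the integral of f
  have hint : ∫ t in (0:ℝ)..1, f t = u := by
    rw [intervalIntegral.integral_of_le (by norm_num : (0:ℝ) ≤ 1), hf_ind,
      integral_indicator measurableSet_Ici,
      Measure.restrict_restrict measurableSet_Ici, hset, setIntegral_const,
      measureReal_def, Real.volume_Icc]
    simp only [smul_eq_mul, mul_one]
    rw [ENNReal.toReal_ofReal (by linarith)]
    simp [hx_def]
  -- key: for each p ≥ 1, u^(1/p) ≤ u + 2*D*2^(1/p)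
  have key : ∀ p : ℝ, 1 ≤ p → u ^ p⁻¹ ≤ u + 2 * D * 2 ^ p⁻¹ := by
    intro p hp
    have hp0 : (0:ℝ) < p := lt_of_lt_of_le one_pos hp
    have hpinv : (0:ℝ) ≤ p⁻¹ := by positivity
    have habs : (fun t => |f t| ^ p) = f := by
      funext t
      simp only [hf_def]
      split_ifs
      · rw [abs_one, Real.one_rpow]
      · rw [abs_zero, Real.zero_rpow (ne_of_gt hp0)]
    have H := h p hp 0 1 one_pos f hBV
    rw [hV] at H
    simp only [habs, hint, sub_zero, Real.one_rpow, one_mul, ENNReal.toReal_one,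
      mul_one, abs_of_pos hu0] at H
    -- bound the constant
    have h2p : (1:ℝ) ≤ 2 ^ (p + 1) := Real.one_le_rpow (by norm_num) (by linarith)
    have hb1 : (2 ^ (p + 1) - 1 : ℝ) ^ p⁻¹ ≤ 2 * 2 ^ p⁻¹ := by
      have h1 : (2 ^ (p + 1) - 1 : ℝ) ^ p⁻¹ ≤ ((2:ℝ) ^ (p + 1)) ^ p⁻¹ :=
        Real.rpow_le_rpow (by linarith) (by linarith) hpinv
      have h2 : ((2:ℝ) ^ (p + 1)) ^ p⁻¹ = 2 ^ ((p + 1) * p⁻¹) :=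
        (Real.rpow_mul (by norm_num) (p + 1) p⁻¹).symm
      have h3 : (p + 1) * p⁻¹ = 1 + p⁻¹ := by
        field_simp
      have h4 : (2:ℝ) ^ (1 + p⁻¹) = 2 * 2 ^ p⁻¹ := by
        rw [Real.rpow_add (by norm_num), Real.rpow_one]
      calc (2 ^ (p + 1) - 1 : ℝ) ^ p⁻¹ ≤ ((2:ℝ) ^ (p + 1)) ^ p⁻¹ := h1
        _ = 2 * 2 ^ p⁻¹ := by rw [h2, h3, h4]
    have hb2 : (p + 1 : ℝ) ^ (-p⁻¹) ≤ 1 :=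
      Real.rpow_le_one_of_one_le_of_nonpos (by linarith) (by linarith)
    have hb2' : (0:ℝ) ≤ (p + 1 : ℝ) ^ (-p⁻¹) := Real.rpow_nonneg (by linarith) _
    have hb1' : (0:ℝ) ≤ (2 ^ (p + 1) - 1 : ℝ) ^ p⁻¹ := Real.rpow_nonneg (by linarith) _
    have h2pinv : (0:ℝ) ≤ (2:ℝ) ^ p⁻¹ := Real.rpow_nonneg (by norm_num) _
    have hbnd : D * ((2 ^ (p + 1) - 1 : ℝ) ^ p⁻¹ * (p + 1) ^ (-p⁻¹)) ≤ 2 * D * 2 ^ p⁻¹ := by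
      have : (2 ^ (p + 1) - 1 : ℝ) ^ p⁻¹ * (p + 1) ^ (-p⁻¹) ≤ 2 * 2 ^ p⁻¹ := by
        calc (2 ^ (p + 1) - 1 : ℝ) ^ p⁻¹ * (p + 1) ^ (-p⁻¹)
            ≤ (2 ^ (p + 1) - 1 : ℝ) ^ p⁻¹ * 1 := by
              exact mul_le_mul_of_nonneg_left hb2 hb1'
          _ = (2 ^ (p + 1) - 1 : ℝ) ^ p⁻¹ := mul_one _
          _ ≤ 2 * 2 ^ p⁻¹ := hb1
      calc D * ((2 ^ (p + 1) - 1 : ℝ) ^ p⁻¹ * (p + 1) ^ (-p⁻¹))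
          ≤ D * (2 * 2 ^ p⁻¹) := mul_le_mul_of_nonneg_left this hD.le
        _ = 2 * D * 2 ^ p⁻¹ := by ring
    linarith
  -- limiting argument
  have hlim : Tendsto (fun p : ℝ => u ^ p⁻¹ - 2 * D * 2 ^ p⁻¹) atTop
      (nhds (1 - 2 * D)) := by
    have h1 := tendsto_rpow_inv_one hu0
    have h2 := (tendsto_rpow_inv_one (by norm_num : (0:ℝ) < 2)).const_mul (2 * D)
    have := h1.sub h2
    simpa using this
  have hgt : u < 1 - 2 * D := by simp only [hu_def]; linarith
  have hev : ∀ᶠ p : ℝ in atTop, u < u ^ p⁻¹ - 2 * D * 2 ^ p⁻¹ :=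
    hlim.eventually_const_lt hgt
  obtain ⟨p, hp1, hp2⟩ := (hev.and (eventually_ge_atTop (1:ℝ))).exists
  have := key p hp2
  linarith
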